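/- Fix vertices s, t ∈ V, let w : E → ℝ be a positive edge-weight function, and let H ⊆ E be the set of edges that are marked from s, or marked from t, or are level-W. If some s–t walk of minimum total weight (among all s–t walks in G) is a taut path, then there exists an s–t walk of minimum total weight all of whose edges belong to H; that is, restricting the shortest-path search to the subgraph H preserves optimality. -/

import Mathlib

open SimpleGraph

variable {V : Type*}

/-- The set of levels (under `L`) of taut neighbours of edge `e` at vertex `v`:
edges `f` of `G` incident to `v` such that the turn from `e` to `f` at `v` is taut. -/
def tautNbrLevels (G : SimpleGraph V) (taut : V → Sym2 V → Sym2 V → Prop)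
    (L : Sym2 V → ℕ∞) (v : V) (e : Sym2 V) : Set ℕ∞ :=
  {n | ∃ f ∈ G.edgeSet, v ∈ f ∧ taut v e f ∧ n = L f}

/-- The monotone operator on `E → ℕ∞` whose least fixed point defines edge levels:
`(levelOp L) e = 1 + min over the endpoints v of e of sup {L f : f taut neighbour of e at v}`
(with `sSup ∅ = 0`). -/
noncomputable def levelOp (G : SimpleGraph V) (taut : V → Sym2 V → Sym2 V → Prop)
    (L : Sym2 V → ℕ∞) (e : Sym2 V) : ℕ∞ :=
  1 + ⨅ v ∈ e, sSup (tautNbrLevels G taut L v e)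

/-- `L` is the edge-level function: the pointwise least fixed point (on edges of `G`)
of the level operator. -/
def IsEdgeLevel (G : SimpleGraph V) (taut : V → Sym2 V → Sym2 V → Prop)
    (L : Sym2 V → ℕ∞) : Prop :=
  (∀ e ∈ G.edgeSet, L e = levelOp G taut L e) ∧
  ∀ L' : Sym2 V → ℕ∞, (∀ e ∈ G.edgeSet, L' e = levelOp G taut L' e) →
    ∀ e ∈ G.edgeSet, L e ≤ L' e

/-- `p 0, p 1, …, p n` is a taut path in `G`: a walk of length `n ≥ 1` such that at every
interior vertex `p i` (`1 ≤ i ≤ n-1`), the turn from edge `p (i-1) p i` to edge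
`p i p (i+1)` is taut. -/
def IsTautPath (G : SimpleGraph V) (taut : V → Sym2 V → Sym2 V → Prop)
    (n : ℕ) (p : ℕ → V) : Prop :=
  1 ≤ n ∧ (∀ i < n, G.Adj (p i) (p (i + 1))) ∧
  ∀ i, 1 ≤ i → i < n → taut (p i) s(p (i - 1), p i) s(p i, p (i + 1))

/-- An edge `e` is *marked from* `s` if there is a taut path starting at `s` whose edges
all have finite level, whose successive edge levels are strictly increasing, and whose
final edge is `e`. -/
def MarkedFrom (G : SimpleGraph V) (taut : V → Sym2 V → Sym2 V → Prop)
    (L : Sym2 V → ℕ∞) (s : V) (e : Sym2 V) : Prop :=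
  ∃ (m : ℕ) (p : ℕ → V), IsTautPath G taut m p ∧ p 0 = s ∧
    (∀ i, 1 ≤ i → i ≤ m → L s(p (i - 1), p i) < ⊤) ∧
    (∀ i, 1 ≤ i → i + 1 ≤ m → L s(p (i - 1), p i) < L s(p i, p (i + 1))) ∧
    s(p (m - 1), p m) = e

/-- `p 0, p 1, …, p n` is a walk in `G`. -/
def IsWalk (G : SimpleGraph V) (n : ℕ) (p : ℕ → V) : Prop :=
  ∀ i < n, G.Adj (p i) (p (i + 1))

/-- The total weight of the walk `p 0, p 1, …, p n`: the sum of `w` over its edges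
(with multiplicity). -/
noncomputable def walkWeight (w : Sym2 V → ℝ) (n : ℕ) (p : ℕ → V) : ℝ :=
  ∑ i ∈ Finset.range n, w s(p i, p (i + 1))

/-- Let `w` be a positive edge-weight function and `H` the set of edges marked from `s`,
marked from `t`, or level-W. If some `s`–`t` walk of minimum total weight is a taut path,
then there is an `s`–`t` walk of minimum total weight all of whose edges belong to `H`. -/
lemma iInf_sym2_pair {α : Type*} [CompleteLattice α] (f : V → α) (a b : V) :
    (⨅ v ∈ s(a,b), f v) = f a ⊓ f b := by
  apply le_antisymm
  · exact le_inf (iInf₂_le a (Sym2.mem_mk_left a b)) (iInf₂_le b (Sym2.mem_mk_right a b))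
  · refine le_iInf₂ fun v hv => ?_
    rcases Sym2.mem_iff.mp hv with rfl | rfl
    · exact inf_le_left
    · exact inf_le_right

lemma level_step (G : SimpleGraph V) (taut : V → Sym2 V → Sym2 V → Prop)
    (taut_symm : ∀ v e f, taut v e f → taut v f e)
    (L : Sym2 V → ℕ∞)
    (hfix : ∀ e ∈ G.edgeSet, L e = levelOp G taut L e)
    (a b c d : V) (hab : G.Adj a b) (hbc : G.Adj b c) (hcd : G.Adj c d)
    (h1 : taut b s(a,b) s(b,c)) (h2 : taut c s(b,c) s(c,d))
    (hfin : L s(b,c) < ⊤) (hge : L s(b,c) ≤ L s(a,b)) :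
    L s(c,d) < L s(b,c) := by
  have heq : L s(b,c) = 1 + (sSup (tautNbrLevels G taut L b s(b,c)) ⊓
      sSup (tautNbrLevels G taut L c s(b,c))) := by
    rw [hfix s(b,c) (G.mem_edgeSet.mpr hbc), levelOp,
      iInf_sym2_pair (fun v => sSup (tautNbrLevels G taut L v s(b,c))) b c]
  have hSb : L s(a,b) ≤ sSup (tautNbrLevels G taut L b s(b,c)) :=
    le_sSup ⟨s(a,b), G.mem_edgeSet.mpr hab, Sym2.mem_mk_right a b, taut_symm _ _ _ h1, rfl⟩
  have hSc : L s(c,d) ≤ sSup (tautNbrLevels G taut L c s(b,c)) :=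
    le_sSup ⟨s(c,d), G.mem_edgeSet.mpr hcd, Sym2.mem_mk_left c d, h2, rfl⟩
  rcases le_total (sSup (tautNbrLevels G taut L b s(b,c)))
      (sSup (tautNbrLevels G taut L c s(b,c))) with h | h
  · rw [inf_eq_left.mpr h] at heq
    exfalso
    have h1' : L s(b,c) < L s(b,c) + 1 := (ENat.add_one_le_iff hfin.ne).mp le_rfl
    have h2' : L s(b,c) + 1 ≤ 1 + sSup (tautNbrLevels G taut L b s(b,c)) := by
      rw [add_comm]
      exact add_le_add le_rfl (hge.trans hSb)
    exact absurd (heq ▸ (h1'.trans_le h2')) (lt_irrefl _)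
  · rw [inf_eq_right.mpr h] at heq
    have hSc_fin : sSup (tautNbrLevels G taut L c s(b,c)) ≠ ⊤ := by
      intro hT
      rw [hT] at heq
      simp at heq
      exact absurd heq hfin.ne
    calc L s(c,d) ≤ sSup (tautNbrLevels G taut L c s(b,c)) := hSc
      _ < sSup (tautNbrLevels G taut L c s(b,c)) + 1 := (ENat.add_one_le_iff hSc_fin).mp le_rfl
      _ = L s(b,c) := by rw [heq, add_comm]

theorem exists_min_weight_walk_in_marked_subgraph
    [Fintype V] (G : SimpleGraph V)
    (taut : V → Sym2 V → Sym2 V → Prop)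
    (taut_symm : ∀ v e f, taut v e f → taut v f e)
    (L : Sym2 V → ℕ∞) (hL : IsEdgeLevel G taut L)
    (s t : V) (w : Sym2 V → ℝ) (hw : ∀ e ∈ G.edgeSet, 0 < w e)
    (H : Set (Sym2 V))
    (hH : H = {e | MarkedFrom G taut L s e ∨ MarkedFrom G taut L t e ∨ L e = ⊤})
    (n : ℕ) (p : ℕ → V) (hwalk : IsWalk G n p) (hps : p 0 = s) (hpt : p n = t)
    (hmin : ∀ (m : ℕ) (q : ℕ → V), IsWalk G m q → q 0 = s → q m = t →
      walkWeight w n p ≤ walkWeight w m q)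
    (htaut : IsTautPath G taut n p) :
    ∃ (m : ℕ) (q : ℕ → V), IsWalk G m q ∧ q 0 = s ∧ q m = t ∧
      (∀ (m' : ℕ) (q' : ℕ → V), IsWalk G m' q' → q' 0 = s → q' m' = t →
        walkWeight w m q ≤ walkWeight w m' q') ∧
      ∀ i < m, s(q i, q (i + 1)) ∈ H := by
  subst hH
  refine ⟨n, p, hwalk, hps, hpt, hmin, ?_⟩
  intro i hi
  simp only [Set.mem_setOf_eq]
  -- key local lemma
  have lemA : ∀ k, 1 ≤ k → k + 2 ≤ n → L s(p k, p (k+1)) < ⊤ →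
      L s(p k, p (k+1)) ≤ L s(p (k-1), p k) → L s(p (k+1), p (k+2)) < L s(p k, p (k+1)) := by
    intro k hk1 hk2 hfin hge
    have hab : G.Adj (p (k-1)) (p k) := by
      have h := hwalk (k-1) (by omega)
      rwa [show k - 1 + 1 = k from by omega] at h
    have hbc : G.Adj (p k) (p (k+1)) := hwalk k (by omega)
    have hcd : G.Adj (p (k+1)) (p (k+2)) := by
      have h := hwalk (k+1) (by omega)
      rwa [show k + 1 + 1 = k + 2 from rfl] at h
    have h1 : taut (p k) s(p (k-1), p k) s(p k, p (k+1)) := htaut.2.2 k hk1 (by omega)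
    have h2 : taut (p (k+1)) s(p k, p (k+1)) s(p (k+1), p (k+2)) := by
      have h := htaut.2.2 (k+1) (by omega) (by omega)
      rwa [show k + 1 - 1 = k from by omega] at h
    exact level_step G taut taut_symm L hL.1 _ _ _ _ hab hbc hcd h1 h2 hfin hge
  by_cases hfin_i : L s(p i, p (i+1)) < ⊤
  swap
  · exact Or.inr (Or.inr (top_le_iff.mp (not_lt.mp hfin_i)))
  by_cases hA : ∀ j, 1 ≤ j → j ≤ i → L s(p (j-1), p j) < L s(p j, p (j+1))
  · -- marked from s via the prefix
    left
    have mono : ∀ b, b ≤ i → ∀ a, a ≤ b → L s(p a, p (a+1)) ≤ L s(p b, p (b+1)) := by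
      intro b
      induction b with
      | zero =>
        intro _ a ha
        rw [Nat.le_zero.mp ha]
      | succ m ih =>
        intro hb a ha
        rcases Nat.eq_or_lt_of_le ha with h | h
        · rw [h]
        · have h1 := ih (by omega) a (by omega)
          have h2 := hA (m+1) (by omega) hb
          rw [show m + 1 - 1 = m from by omega] at h2
          exact h1.trans h2.le
    refine ⟨i+1, p, ⟨by omega, fun k hk => hwalk k (by omega),
      fun k hk1 hk2 => htaut.2.2 k hk1 (by omega)⟩, hps, ?_, ?_, ?_⟩
    · intro k hk1 hk2
      rw [show s(p (k-1), p k) = s(p (k-1), p ((k-1)+1)) from by rw [show k - 1 + 1 = k from by omega]]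
      exact lt_of_le_of_lt (mono i le_rfl (k-1) (by omega)) hfin_i
    · intro k hk1 hk2
      exact hA k hk1 (by omega)
    · rw [show i + 1 - 1 = i from by omega]
  · -- there is a descent; marked from t via the reversed suffix
    push_neg at hA
    obtain ⟨j₀, hj₀1, hj₀i, hj₀⟩ := hA
    have hj : ∃ j, 1 ≤ j ∧ j ≤ i ∧ L s(p j, p (j+1)) < ⊤ ∧
        L s(p j, p (j+1)) ≤ L s(p (j-1), p j) := by
      by_cases hf : L s(p j₀, p (j₀+1)) < ⊤
      · exact ⟨j₀, hj₀1, hj₀i, hf, hj₀⟩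
      · have hj₀T : L s(p j₀, p (j₀+1)) = ⊤ := top_le_iff.mp (not_lt.mp hf)
        have hj₀lt : j₀ < i := by
          rcases Nat.lt_or_ge j₀ i with h | h
          · exact h
          · exfalso
            rw [show j₀ = i from by omega] at hj₀T
            exact hfin_i.ne hj₀T
        classical
        have hex : ∃ k, j₀ < k ∧ k ≤ i ∧ L s(p k, p (k+1)) < ⊤ := ⟨i, hj₀lt, le_rfl, hfin_i⟩
        obtain ⟨hkj, hki, hkfin⟩ := Nat.find_spec hex
        refine ⟨Nat.find hex, by omega, hki, hkfin, ?_⟩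
        have hT : L s(p (Nat.find hex - 1), p (Nat.find hex - 1 + 1)) = ⊤ := by
          rcases Nat.eq_or_lt_of_le (Nat.succ_le_of_lt hkj) with h | h
          · rw [show Nat.find hex - 1 = j₀ from by omega]
            exact hj₀T
          · have hm := Nat.find_min hex (m := Nat.find hex - 1) (by omega)
            push_neg at hm
            exact top_le_iff.mp (hm (by omega) (by omega))
        rw [show s(p (Nat.find hex - 1), p (Nat.find hex)) =
            s(p (Nat.find hex - 1), p (Nat.find hex - 1 + 1)) from by
          rw [show Nat.find hex - 1 + 1 = Nat.find hex from by omega]]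
        rw [hT]
        exact le_top
    obtain ⟨j, hj1, hji, hjfin, hjge⟩ := hj
    have dec : ∀ k, k < n → j ≤ k → L s(p k, p (k+1)) < ⊤ ∧
        L s(p k, p (k+1)) ≤ L s(p (k-1), p k) := by
      intro k
      induction k with
      | zero => intro _ h; omega
      | succ m ih =>
        intro hm hjk
        rcases Nat.eq_or_lt_of_le hjk with h | h
        · rw [← h]
          exact ⟨hjfin, hjge⟩
        · obtain ⟨hf, hg⟩ := ih (by omega) (by omega)
          have hs := lemA m (by omega) (by omega) hf hg
          constructor
          · exact hs.trans hf
          · rw [show m + 1 - 1 = m from by omega]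
            exact hs.le
    have decstrict : ∀ k, j ≤ k → k + 2 ≤ n → L s(p (k+1), p (k+2)) < L s(p k, p (k+1)) := by
      intro k hk1 hk2
      obtain ⟨hf, hg⟩ := dec k (by omega) hk1
      exact lemA k (by omega) hk2 hf hg
    right; left
    refine ⟨n - i, fun k => p (n - k), ⟨by omega, ?_, ?_⟩, ?_, ?_, ?_, ?_⟩
    · -- adjacency of reversed walk
      intro k hk
      simp only []
      rw [show n - (k+1) = n - k - 1 from by omega]
      have h := hwalk (n - k - 1) (by omega)
      rw [show n - k - 1 + 1 = n - k from by omega] at h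
      exact h.symm
    · -- tautness of reversed walk
      intro k hk1 hk2
      simp only []
      rw [show n - (k-1) = n - k + 1 from by omega,
        show n - (k+1) = n - k - 1 from by omega,
        show s(p (n - k + 1), p (n-k)) = s(p (n-k), p (n - k + 1)) from Sym2.eq_swap,
        show s(p (n-k), p (n - k - 1)) = s(p (n - k - 1), p (n-k)) from Sym2.eq_swap]
      exact taut_symm _ _ _ (htaut.2.2 (n-k) (by omega) (by omega))
    · -- starts at t
      simp only []
      rw [show n - 0 = n from rfl]
      exact hpt
    · -- finite levels
      intro k hk1 hk2
      simp only []
      rw [show n - (k-1) = n - k + 1 from by omega,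
        show s(p (n - k + 1), p (n-k)) = s(p (n-k), p (n - k + 1)) from Sym2.eq_swap]
      exact (dec (n-k) (by omega) (by omega)).1
    · -- strictly increasing levels
      intro k hk1 hk2
      simp only []
      rw [show n - (k-1) = n - k + 1 from by omega,
        show n - (k+1) = n - k - 1 from by omega,
        show s(p (n - k + 1), p (n-k)) = s(p (n-k), p (n - k + 1)) from Sym2.eq_swap,
        show s(p (n-k), p (n - k - 1)) = s(p (n - k - 1), p (n-k)) from Sym2.eq_swap]
      have h := decstrict (n - k - 1) (by omega) (by omega)
      rwa [show n - k - 1 + 1 = n - k from by omega,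
        show n - k - 1 + 2 = n - k + 1 from by omega] at h
    · -- last edge
      simp only []
      rw [show n - (n - i - 1) = i + 1 from by omega, show n - (n - i) = i from by omega]
      exact Sym2.eq_swap
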